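/- For every real p ≥ 1, every positive integer N, and every tuple of real numbers c_1, ..., c_N, the average over all sign vectors (ε_1,...,ε_N) ∈ {±1}^N of |∑_{n≤N} c_n ε_n|^p is at most p^{p/2} · (∑_{n≤N} c_n^2)^{p/2}. -/

import Mathlib

open Finset

def Dn (k : ℕ) : ℕ := ∏ i ∈ Finset.range k, (2*i+1)

lemma Dn_succ (k : ℕ) : Dn (k+1) = Dn k * (2*k+1) := Finset.prod_range_succ _ _

lemma Dn_pos (k : ℕ) : 0 < Dn k := Finset.prod_pos (fun i _ => by omega)

lemma Dn_fact (k : ℕ) : Dn k * (2^k * Nat.factorial k) = Nat.factorial (2*k) := by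
  induction k with
  | zero => rfl
  | succ k ih =>
    have h : 2*(k+1) = (2*k+1)+1 := by omega
    rw [h, Nat.factorial_succ (2*k+1), Nat.factorial_succ (2*k), ← ih, Dn_succ, Nat.factorial_succ k, pow_succ]
    ring

lemma pow_fact_le (m : ℕ) : 2^m * Nat.factorial m ≤ Nat.factorial (2*m) := by
  calc 2^m * Nat.factorial m = 1 * (2^m * Nat.factorial m) := (one_mul _).symm
    _ ≤ Dn m * (2^m * Nat.factorial m) := Nat.mul_le_mul_right _ (Dn_pos m)
    _ = Nat.factorial (2*m) := Dn_fact m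

lemma Dn_key {j k : ℕ} (h : j ≤ k) :
    (2*k).choose (2*j) * Dn j ≤ Dn k * k.choose j := by
  have e1 : (2*k).choose (2*j) * (2*j).factorial * (2*k - 2*j).factorial = (2*k).factorial :=
    Nat.choose_mul_factorial_mul_factorial (by omega)
  have e2 : k.choose j * j.factorial * (k-j).factorial = k.factorial :=
    Nat.choose_mul_factorial_mul_factorial h
  have e3 := Dn_fact j
  have e4 := Dn_fact k
  have e5 : 2*k - 2*j = 2*(k-j) := by omega
  have e6 : (2:ℕ)^k = 2^j * 2^(k-j) := by rw [← pow_add]; congr 1; omega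
  have hle : 2^(k-j) * (k-j).factorial ≤ (2*(k-j)).factorial := pow_fact_le _
  refine Nat.le_of_mul_le_mul_right ?_
    (show 0 < (2^j * j.factorial) * (2*(k-j)).factorial by positivity)
  calc (2*k).choose (2*j) * Dn j * ((2^j * j.factorial) * (2*(k-j)).factorial)
      = (2*k).choose (2*j) * (Dn j * (2^j * j.factorial)) * (2*(k-j)).factorial := by ring
    _ = (2*k).factorial := by rw [e3, ← e1, e5]
    _ = Dn k * (2^k * k.factorial) := e4.symm
    _ = Dn k * k.choose j * ((2^j * j.factorial) * (2^(k-j) * (k-j).factorial)) := by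
        rw [← e2, e6]; ring
    _ ≤ Dn k * k.choose j * ((2^j * j.factorial) * (2*(k-j)).factorial) := by
        exact Nat.mul_le_mul_left _ (Nat.mul_le_mul_left _ hle)
lemma Dn_zero : Dn 0 = 1 := rfl

lemma add_pow_even (x y : ℝ) (k : ℕ) :
    (x+y)^(2*k) + (x-y)^(2*k)
      = 2 * ∑ j ∈ Finset.range (k+1),
          ((2*k).choose (2*j) : ℝ) * x^(2*j) * ((y^2)^(k-j)) := by
  set g : ℕ → ℝ := fun i =>
    x^i * y^(2*k-i) * ((2*k).choose i : ℝ) * (1 + (-1:ℝ)^(2*k-i)) with hg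
  have h1 : (x+y)^(2*k) + (x-y)^(2*k) = ∑ i ∈ Finset.range (2*k+1), g i := by
    have ha := add_pow x y (2*k)
    have hb := add_pow x (-y) (2*k)
    rw [show x - y = x + (-y) by ring, ha, hb, ← Finset.sum_add_distrib]
    refine Finset.sum_congr rfl (fun i _ => ?_)
    simp only [hg]
    rw [show (-y)^(2*k-i) = (-1:ℝ)^(2*k-i) * y^(2*k-i) by rw [neg_pow]]
    ring
  have h2 : ∑ i ∈ Finset.range (2*k+1), g i
      = ∑ i ∈ (Finset.range (2*k+1)).filter (fun i => Even i), g i := by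
    rw [Finset.sum_filter_of_ne]
    intro i hi hgi
    by_contra hodd
    apply hgi
    have hile : i ≤ 2*k := by simpa [Nat.lt_succ_iff] using Finset.mem_range.mp hi
    have : ¬ Even (2*k - i) := by
      rw [Nat.even_sub hile]
      simp [hodd]
    have : Odd (2*k - i) := Nat.not_even_iff_odd.mp this
    simp only [hg]
    simp [this.neg_one_pow]
  have h3 : (Finset.range (2*k+1)).filter (fun i => Even i)
      = (Finset.range (k+1)).image (fun j => 2*j) := by
    ext i
    simp only [Finset.mem_filter, Finset.mem_range, Finset.mem_image, Nat.even_iff]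
    constructor
    · rintro ⟨h1, h2⟩
      exact ⟨i/2, by omega, by omega⟩
    · rintro ⟨j, hj, rfl⟩
      omega
  have h4 : ∑ i ∈ (Finset.range (k+1)).image (fun j => 2*j), g i
      = ∑ j ∈ Finset.range (k+1), g (2*j) :=
    Finset.sum_image (fun a _ b _ hab => by omega)
  rw [h1, h2, h3, h4, Finset.mul_sum]
  refine Finset.sum_congr rfl (fun j hj => ?_)
  have hjk : j ≤ k := by simpa [Nat.lt_succ_iff] using Finset.mem_range.mp hj
  have h5 : 2*k - 2*j = 2*(k-j) := by omega
  have h6 : Even (2*(k-j)) := even_two_mul _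
  simp only [hg]
  simp only [h5, h6.neg_one_pow, ← pow_mul]
  ring_nf


lemma Dn_le (p : ℝ) (hp : 1 ≤ p) (k : ℕ) (h : 2*(k:ℝ) - 2 ≤ p) : (Dn k : ℝ) ≤ p ^ k := by
  have hp0 : 0 < p := lt_of_lt_of_le one_pos hp
  refine (pow_le_pow_iff_left₀ (Nat.cast_nonneg _) (by positivity) (two_ne_zero)).mp ?_
  have hDcast : (Dn k : ℝ) = ∏ i ∈ Finset.range k, (2*(i:ℝ)+1) := by
    rw [Dn]; push_cast; rfl
  have hrefl : ∏ j ∈ Finset.range k, (2*((k-1-j : ℕ):ℝ)+1) = ∏ j ∈ Finset.range k, (2*(j:ℝ)+1) :=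
    Finset.prod_range_reflect (fun j => (2*(j:ℝ)+1)) k
  calc ((Dn k : ℝ))^2 = ∏ j ∈ Finset.range k, ((2*(j:ℝ)+1) * (2*((k-1-j : ℕ):ℝ)+1)) := by
        rw [Finset.prod_mul_distrib, hrefl, hDcast]; ring
    _ ≤ ∏ _j ∈ Finset.range k, p^2 := by
        refine Finset.prod_le_prod (fun j _ => by positivity) (fun j hj => ?_)
        have hjk : j + (k-1-j) + 1 = k := by
          have := Finset.mem_range.mp hj; omega
        set m : ℕ := k-1-j with hm
        have hcast : (j:ℝ) + (m:ℝ) + 1 = (k:ℝ) := by exact_mod_cast congrArg (Nat.cast : ℕ → ℝ) hjk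
        have h2t : 2*((j:ℝ) + m) ≤ p := by linarith
        rcases Nat.eq_zero_or_pos (j + m) with h0 | h1
        · have hj0 : j = 0 := by omega
          have hm0 : m = 0 := by omega
          rw [hj0, hm0]
          push_cast
          nlinarith
        · have h1' : (1:ℝ) ≤ (j:ℝ) + m := by exact_mod_cast h1
          nlinarith [sq_nonneg ((j:ℝ) - m),
            mul_nonneg (sub_nonneg.mpr h1') (by positivity : (0:ℝ) ≤ 3*((j:ℝ)+m)+1),
            mul_nonneg (sub_nonneg.mpr h2t) (by positivity : (0:ℝ) ≤ p + 2*((j:ℝ)+m))]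
    _ = (p^k)^2 := by rw [Finset.prod_const, Finset.card_range]; ring

lemma evenMoment : ∀ (N : ℕ) (c : Fin N → ℝ) (k : ℕ),
    ∑ ε : Fin N → Bool, (∑ n, c n * (if ε n then (1:ℝ) else -1)) ^ (2*k)
      ≤ 2^N * Dn k * (∑ n, (c n)^2) ^ k := by
  intro N
  induction N with
  | zero =>
    intro c k
    have h0 : ∀ ε : Fin 0 → Bool, (∑ n, c n * (if ε n then (1:ℝ) else -1)) = 0 := by
      intro ε; simp
    simp only [h0]
    rw [Finset.sum_const, Finset.card_univ]
    have hcard : Fintype.card (Fin 0 → Bool) = 1 := by simp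
    rw [hcard]
    have h1 : (∑ n : Fin 0, (c n)^2) = 0 := by simp
    rw [h1]
    cases k with
    | zero => simp [Dn_zero]
    | succ k => simp [Nat.mul_succ, pow_succ]
  | succ N ih =>
    intro c k
    set y : ℝ := c 0 with hy
    set s2 : ℝ := ∑ i : Fin N, (c i.succ)^2 with hs2
    have hs2nonneg : 0 ≤ s2 := by positivity
    set x : (Fin N → Bool) → ℝ := fun ε₀ => ∑ i, c i.succ * (if ε₀ i then (1:ℝ) else -1)
      with hx
    -- split off the first coordinate
    have hsplit : ∑ ε : Fin (N+1) → Bool, (∑ n, c n * (if ε n then (1:ℝ) else -1)) ^ (2*k)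
        = ∑ ε₀ : Fin N → Bool, ((x ε₀ + y)^(2*k) + (x ε₀ - y)^(2*k)) := by
      rw [← Fintype.sum_equiv (Fin.consEquiv (fun _ : Fin (N+1) => Bool))
        (fun q : Bool × (Fin N → Bool) =>
          (∑ n, c n * (if (Fin.consEquiv (fun _ : Fin (N+1) => Bool)) q n then (1:ℝ) else -1)) ^ (2*k))
        (fun ε => (∑ n, c n * (if ε n then (1:ℝ) else -1)) ^ (2*k)) (fun q => rfl)]
      rw [Fintype.sum_prod_type_right]
      refine Finset.sum_congr rfl (fun ε₀ _ => ?_)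
      rw [Fintype.sum_bool]
      have hs : ∀ b : Bool, ∑ n, c n * (if (Fin.consEquiv (fun _ : Fin (N+1) => Bool)) (b, ε₀) n then (1:ℝ) else -1)
          = c 0 * (if b then (1:ℝ) else -1) + x ε₀ := by
        intro b
        show ∑ n, c n * (if (Fin.cons b ε₀ : Fin (N+1) → Bool) n = true then (1:ℝ) else -1) = _
        rw [Fin.sum_univ_succ]
        simp [hx]
      simp only [hs]
      norm_num
      ring_nf
      rw [hy]; ring
    rw [hsplit]
    have hsum : (∑ n : Fin (N+1), (c n)^2) = y^2 + s2 := by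
      rw [Fin.sum_univ_succ, hs2, hy]
    calc ∑ ε₀ : Fin N → Bool, ((x ε₀ + y)^(2*k) + (x ε₀ - y)^(2*k))
        = 2 * ∑ j ∈ Finset.range (k+1), ((2*k).choose (2*j) : ℝ) * (y^2)^(k-j)
            * (∑ ε₀ : Fin N → Bool, (x ε₀)^(2*j)) := by
          simp only [add_pow_even]
          rw [← Finset.mul_sum, Finset.sum_comm]
          congr 1
          refine Finset.sum_congr rfl (fun j _ => ?_)
          rw [Finset.mul_sum]
          exact Finset.sum_congr rfl (fun ε₀ _ => by ring)
      _ ≤ 2 * ∑ j ∈ Finset.range (k+1), ((2*k).choose (2*j) : ℝ) * (y^2)^(k-j)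
            * (2^N * Dn j * s2^j) := by
          refine mul_le_mul_of_nonneg_left (Finset.sum_le_sum (fun j _ => ?_)) (by norm_num)
          exact mul_le_mul_of_nonneg_left (ih _ j) (by positivity)
      _ ≤ 2 * ∑ j ∈ Finset.range (k+1), ((Dn k * k.choose j : ℕ) : ℝ) * (y^2)^(k-j)
            * (2^N * s2^j) := by
          refine mul_le_mul_of_nonneg_left (Finset.sum_le_sum (fun j hj => ?_)) (by norm_num)
          have hjk : j ≤ k := by simpa [Nat.lt_succ_iff] using Finset.mem_range.mp hj
          calc ((2*k).choose (2*j) : ℝ) * (y^2)^(k-j) * (2^N * Dn j * s2^j)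
              = (((2*k).choose (2*j) * Dn j : ℕ) : ℝ) * ((y^2)^(k-j) * (2^N * s2^j)) := by
                push_cast; ring
            _ ≤ ((Dn k * k.choose j : ℕ) : ℝ) * ((y^2)^(k-j) * (2^N * s2^j)) := by
                refine mul_le_mul_of_nonneg_right ?_ (by positivity)
                exact_mod_cast Dn_key hjk
            _ = ((Dn k * k.choose j : ℕ) : ℝ) * (y^2)^(k-j) * (2^N * s2^j) := by ring
      _ = 2^(N+1) * Dn k * (s2 + y^2)^k := by
          rw [add_pow s2 (y^2) k, Finset.mul_sum, Finset.mul_sum]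
          refine Finset.sum_congr rfl (fun j _ => ?_)
          push_cast
          ring
      _ = 2^(N+1) * Dn k * (∑ n : Fin (N+1), (c n)^2)^k := by
          rw [hsum, add_comm s2 (y^2)]

theorem khintchine_upper (p : ℝ) (hp : 1 ≤ p) (N : ℕ) (hN : 0 < N) (c : Fin N → ℝ) :
    (1 / 2 ^ N) * ∑ ε : Fin N → Bool, |∑ n, c n * (if ε n then 1 else -1)| ^ p
      ≤ p ^ (p / 2) * (∑ n, (c n) ^ 2) ^ (p / 2) := by
  have hp0 : 0 < p := lt_of_lt_of_le one_pos hp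
  set k : ℕ := ⌈p/2⌉₊ with hk
  have hk1 : 0 < k := Nat.ceil_pos.mpr (by positivity)
  have hkR : (0:ℝ) < (k:ℝ) := by exact_mod_cast hk1
  have hkp : p ≤ 2*(k:ℝ) := by
    have := Nat.le_ceil (p/2); rw [← hk] at this; linarith
  have hkp2 : 2*(k:ℝ) - 2 ≤ p := by
    have := Nat.ceil_lt_add_one (show (0:ℝ) ≤ p/2 by positivity)
    rw [← hk] at this; linarith
  set q : ℝ := 2*(k:ℝ)/p with hq
  have hq1 : 1 ≤ q := (le_div_iff₀ hp0).mpr (by linarith)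
  have hq0 : 0 < q := lt_of_lt_of_le one_pos hq1
  set σ2 : ℝ := ∑ n, (c n)^2 with hσ2
  have hσ2nonneg : 0 ≤ σ2 := by positivity
  set S : (Fin N → Bool) → ℝ := fun ε => ∑ n, c n * (if ε n then (1:ℝ) else -1) with hS
  have hw' : ∑ _ε : Fin N → Bool, (1/(2:ℝ)^N) = 1 := by
    rw [Finset.sum_const, Finset.card_univ, nsmul_eq_mul]
    have : (Fintype.card (Fin N → Bool) : ℝ) = 2^N := by
      rw [Fintype.card_fun]; push_cast; simp
    rw [this]; field_simp
  have jensen := Real.arith_mean_le_rpow_mean Finset.univ (fun _ => 1/(2:ℝ)^N)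
    (fun ε => |S ε| ^ p) (fun i _ => by positivity) hw' (fun i _ => by positivity) hq1
  have hpow : ∀ ε : Fin N → Bool, (|S ε| ^ p) ^ q = (S ε) ^ (2*k) := by
    intro ε
    rw [← Real.rpow_mul (abs_nonneg (S ε))]
    have hpq : p * q = ((2*k : ℕ) : ℝ) := by
      rw [hq]; push_cast; field_simp
    rw [hpq, Real.rpow_natCast]
    exact (even_two_mul k).pow_abs _
  -- rewrite jensen's RHS inner sum
  have hT : ∑ ε : Fin N → Bool, (1/(2:ℝ)^N) * (|S ε| ^ p) ^ q
      = (1/(2:ℝ)^N) * ∑ ε : Fin N → Bool, (S ε) ^ (2*k) := by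
    rw [Finset.mul_sum]
    exact Finset.sum_congr rfl (fun ε _ => by rw [hpow ε])
  have hT0 : 0 ≤ (1/(2:ℝ)^N) * ∑ ε : Fin N → Bool, (S ε) ^ (2*k) := by
    apply mul_nonneg (by positivity)
    apply Finset.sum_nonneg
    intro ε _
    exact (even_two_mul k).pow_nonneg _
  have hTle : (1/(2:ℝ)^N) * ∑ ε : Fin N → Bool, (S ε) ^ (2*k) ≤ (Dn k : ℝ) * σ2 ^ k := by
    have this : ∑ ε : Fin N → Bool, (S ε) ^ (2*k) ≤ 2^N * (Dn k : ℝ) * σ2 ^ k :=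
      evenMoment N c k
    calc (1/(2:ℝ)^N) * ∑ ε : Fin N → Bool, (S ε) ^ (2*k)
        ≤ (1/(2:ℝ)^N) * (2^N * Dn k * σ2 ^ k) := by
          apply mul_le_mul_of_nonneg_left this (by positivity)
      _ = (Dn k : ℝ) * σ2 ^ k := by field_simp
  have hfinal : ((Dn k : ℝ) * σ2 ^ k) ^ (1/q) ≤ p ^ (p/2) * σ2 ^ (p/2) := by
    have h1 : ((Dn k : ℝ) * σ2 ^ k) ≤ (p * σ2) ^ k := by
      rw [mul_pow]
      exact mul_le_mul_of_nonneg_right (Dn_le p hp k hkp2) (by positivity)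
    have h2 : ((Dn k : ℝ) * σ2 ^ k) ^ (1/q) ≤ ((p * σ2) ^ k) ^ (1/q) :=
      Real.rpow_le_rpow (by positivity) h1 (by positivity)
    have h3 : ((p * σ2) ^ k : ℝ) ^ (1/q) = (p * σ2) ^ (p/2) := by
      rw [← Real.rpow_natCast (p * σ2) k, ← Real.rpow_mul (by positivity)]
      congr 1
      rw [hq]
      field_simp
    rw [h3] at h2
    rw [Real.mul_rpow (le_of_lt hp0) hσ2nonneg] at h2
    exact h2
  -- assemble
  calc (1 / 2 ^ N) * ∑ ε : Fin N → Bool, |S ε| ^ p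
      = ∑ ε : Fin N → Bool, (1/(2:ℝ)^N) * |S ε| ^ p := Finset.mul_sum _ _ _
    _ ≤ (∑ ε : Fin N → Bool, (1/(2:ℝ)^N) * (|S ε| ^ p) ^ q) ^ (1/q) := jensen
    _ = ((1/(2:ℝ)^N) * ∑ ε : Fin N → Bool, (S ε) ^ (2*k)) ^ (1/q) := by rw [hT]
    _ ≤ ((Dn k : ℝ) * σ2 ^ k) ^ (1/q) := Real.rpow_le_rpow hT0 hTle (by positivity)
    _ ≤ p ^ (p/2) * σ2 ^ (p/2) := hfinal
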